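/- Let (g, [·,·]_1, [·,·]_2, α) be a compatible Hom-Lie algebra and (V, •_1, •_2, β) a representation of it. Then for all scalars λ, η, the triple (g, λ[·,·]_1 + η[·,·]_2, α) is a Hom-Lie algebra and (V, λ•_1 + η•_2, β) is a representation of it. -/
import Mathlib


/-- A bilinear map, as a predicate on plain two-argument functions. -/
def IsBilin (K : Type*) {M N P : Type*} [Field K] [AddCommGroup M] [Module K M]
    [AddCommGroup N] [Module K N] [AddCommGroup P] [Module K P]
    (b : M → N → P) : Prop :=
  (∀ x, IsLinearMap K (b x)) ∧ (∀ y, IsLinearMap K fun x => b x y)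

/-- A Hom-Lie algebra structure: bilinear skew-symmetric bracket `b` and a linear
twisting map `α` satisfying multiplicativity and the Hom-Jacobi identity. -/
def IsHomLie (K : Type*) {g : Type*} [Field K] [AddCommGroup g] [Module K g]
    (b : g → g → g) (α : g → g) : Prop :=
  IsBilin K b ∧ IsLinearMap K α ∧
  (∀ x y, b x y = - b y x) ∧
  (∀ x y, α (b x y) = b (α x) (α y)) ∧
  (∀ x y z, b (b x y) (α z) + b (b y z) (α x) + b (b z x) (α y) = 0)

/-- A compatible Hom-Lie algebra: both brackets and every linear combination of
them are Hom-Lie brackets with the same twisting map `α`. -/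
def IsCompatHomLie (K : Type*) {g : Type*} [Field K] [AddCommGroup g] [Module K g]
    (b₁ b₂ : g → g → g) (α : g → g) : Prop :=
  IsHomLie K b₁ α ∧ IsHomLie K b₂ α ∧
  ∀ l m : K, IsHomLie K (fun x y => l • b₁ x y + m • b₂ x y) α

/-- A representation `(V, ρ, β)` of a Hom-Lie algebra `(g, b, α)`. -/
def IsRep (K : Type*) {g V : Type*} [Field K] [AddCommGroup g] [Module K g]
    [AddCommGroup V] [Module K V]
    (b : g → g → g) (α : g → g) (ρ : g → V → V) (β : V → V) : Prop :=
  IsBilin K ρ ∧ IsLinearMap K β ∧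
  (∀ x v, β (ρ x v) = ρ (α x) (β v)) ∧
  (∀ x y v, ρ (b x y) (β v) = ρ (α x) (ρ y v) - ρ (α y) (ρ x v))

/-- For a compatible Hom-Lie algebra with representation `(V,ρ₁,ρ₂,β)`, every
linear combination `(g, l·b₁ + m·b₂, α)` is a Hom-Lie algebra and
`(V, l·ρ₁ + m·ρ₂, β)` is a representation of it. -/
theorem stmt13 {K g V : Type*} [Field K] [AddCommGroup g] [Module K g]
    [AddCommGroup V] [Module K V]
    (b₁ b₂ : g → g → g) (α : g → g) (ρ₁ ρ₂ : g → V → V) (β : V → V)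
    (h : IsCompatHomLie K b₁ b₂ α)
    (h₁ : IsRep K b₁ α ρ₁ β) (h₂ : IsRep K b₂ α ρ₂ β)
    (hc : ∀ x y v, ρ₂ (b₁ x y) (β v) + ρ₁ (b₂ x y) (β v)
      = ρ₁ (α x) (ρ₂ y v) - ρ₂ (α y) (ρ₁ x v)
        + ρ₂ (α x) (ρ₁ y v) - ρ₁ (α y) (ρ₂ x v)) :
    ∀ l m : K,
      IsHomLie K (fun x y => l • b₁ x y + m • b₂ x y) α ∧
      IsRep K (fun x y => l • b₁ x y + m • b₂ x y) α
        (fun x v => l • ρ₁ x v + m • ρ₂ x v) β := by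

  intro l m
  obtain ⟨⟨hb1, hb1'⟩, hβ, hβeq1, hrep1⟩ := h₁
  obtain ⟨⟨hb2, hb2'⟩, _, hβeq2, hrep2⟩ := h₂
  refine ⟨h.2.2 l m, ⟨⟨fun x => ?_, fun v => ?_⟩, hβ, fun x v => ?_, fun x y v => ?_⟩⟩
  · exact ⟨fun u w => by dsimp only; rw [(hb1 x).1, (hb2 x).1]; module,
      fun c u => by dsimp only; rw [(hb1 x).2, (hb2 x).2]; module⟩
  · exact ⟨fun u w => by dsimp only; rw [(hb1' v).1, (hb2' v).1]; module,
      fun c u => by dsimp only; rw [(hb1' v).2, (hb2' v).2]; module⟩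
  · dsimp only; rw [hβ.1, hβ.2, hβ.2, hβeq1, hβeq2]
  · have e1 : ρ₁ (l • b₁ x y + m • b₂ x y) (β v)
        = l • ρ₁ (b₁ x y) (β v) + m • ρ₁ (b₂ x y) (β v) := by
      rw [(hb1' (β v)).1, (hb1' (β v)).2, (hb1' (β v)).2]
    have e2 : ρ₂ (l • b₁ x y + m • b₂ x y) (β v)
        = l • ρ₂ (b₁ x y) (β v) + m • ρ₂ (b₂ x y) (β v) := by
      rw [(hb2' (β v)).1, (hb2' (β v)).2, (hb2' (β v)).2]
    have r1x := fun (a : g) (u w : V) (c d : K) =>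
      show ρ₁ a (c • u + d • w) = c • ρ₁ a u + d • ρ₁ a w by
        rw [(hb1 a).1, (hb1 a).2, (hb1 a).2]
    have r2x := fun (a : g) (u w : V) (c d : K) =>
      show ρ₂ a (c • u + d • w) = c • ρ₂ a u + d • ρ₂ a w by
        rw [(hb2 a).1, (hb2 a).2, (hb2 a).2]
    dsimp only; simp only [e1, e2, r1x, r2x, hrep1 x y v, hrep2 x y v]
    have hcv := hc x y v
    linear_combination (norm := module) (l * m) • hcv
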